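/- Let λ, c > 0. Define q : ℝ × (0,∞) → ℝ on the open cone {(x,t) : |x| < ct, t > 0} by q(x,t) = I₀((λ/c)√(c²t² − x²)). Then q satisfies the one-dimensional Klein–Gordon equation ∂²q/∂t² − λ² q = c² ∂²q/∂x² on the open cone. -/

import Mathlib

open Real

/-- The modified Bessel function of order zero,
`I₀(x) = Σ_{k=0}^∞ (x/2)^{2k} / (k!)²`. -/
noncomputable def besselI0 (x : ℝ) : ℝ :=
  ∑' k : ℕ, (x / 2) ^ (2 * k) / ((k.factorial : ℝ)) ^ 2

namespace Statement16Aux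

noncomputable def a (b : ℝ) (k : ℕ) : ℝ := b ^ k / ((k.factorial : ℝ)) ^ 2

noncomputable def F (b u : ℝ) : ℝ := ∑' k : ℕ, a b k * u ^ k
noncomputable def F1 (b u : ℝ) : ℝ := ∑' k : ℕ, a b (k + 1) * ((k : ℝ) + 1) * u ^ k
noncomputable def F2 (b u : ℝ) : ℝ :=
  ∑' k : ℕ, a b (k + 2) * ((k : ℝ) + 2) * ((k : ℝ) + 1) * u ^ k

lemma a_nonneg {b : ℝ} (hb : 0 ≤ b) (k : ℕ) : 0 ≤ a b k := by
  unfold a; positivity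

lemma a_succ (b : ℝ) (k : ℕ) : a b (k + 1) = b * a b k / ((k : ℝ) + 1) ^ 2 := by
  unfold a
  rw [Nat.factorial_succ]
  push_cast
  have h : (k.factorial : ℝ) ≠ 0 := Nat.cast_ne_zero.mpr k.factorial_ne_zero
  have h2 : ((k : ℝ) + 1) ≠ 0 := by positivity
  field_simp
  ring

lemma a_succ_le {b : ℝ} (hb : 0 ≤ b) (k : ℕ) : a b (k + 1) ≤ b * a b k := by
  rw [a_succ]
  apply div_le_self
  · exact mul_nonneg hb (a_nonneg hb k)
  · nlinarith [k.cast_nonneg (α := ℝ), mul_nonneg (k.cast_nonneg (α := ℝ)) (k.cast_nonneg (α := ℝ)), mul_nonneg (mul_nonneg (k.cast_nonneg (α := ℝ)) (k.cast_nonneg (α := ℝ))) (k.cast_nonneg (α := ℝ))]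

lemma a_coeff (b : ℝ) (k : ℕ) : a b (k + 1) * ((k : ℝ) + 1) ^ 2 = b * a b k := by
  rw [a_succ]
  have h2 : ((k : ℝ) + 1) ^ 2 ≠ 0 := by positivity
  field_simp

lemma cube_le (k : ℕ) : ((k : ℝ) + 2) ^ 3 ≤ 8 ^ (k + 1) := by
  induction k with
  | zero => norm_num
  | succ n ih =>
    have hn : (0 : ℝ) ≤ (n : ℝ) := n.cast_nonneg
    have h2 : ((n : ℝ) + 1 + 2) ^ 3 ≤ 8 * ((n : ℝ) + 2) ^ 3 := by
      nlinarith [hn, mul_nonneg hn hn, mul_nonneg (mul_nonneg hn hn) hn]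
    push_cast
    calc ((n : ℝ) + 1 + 2) ^ 3 ≤ 8 * ((n : ℝ) + 2) ^ 3 := h2
      _ ≤ 8 * 8 ^ (n + 1) := by nlinarith
      _ = 8 ^ (n + 1 + 1) := by ring

lemma master (x : ℝ) (hx : 0 ≤ x) :
    Summable (fun k : ℕ => ((k : ℝ) + 2) ^ 3 * x ^ k / ((k.factorial : ℝ)) ^ 2) := by
  refine Summable.of_nonneg_of_le (fun k => by positivity) (fun k => ?_)
    (((Real.summable_pow_div_factorial (8 * x)).mul_left 8))
  have hfac : (1 : ℝ) ≤ (k.factorial : ℝ) := by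
    exact_mod_cast Nat.one_le_iff_ne_zero.mpr k.factorial_ne_zero
  have hfac0 : (0 : ℝ) < (k.factorial : ℝ) := by linarith
  have h1 : ((k : ℝ) + 2) ^ 3 * x ^ k ≤ 8 * (8 * x) ^ k := by
    rw [mul_pow]
    calc ((k : ℝ) + 2) ^ 3 * x ^ k ≤ 8 ^ (k + 1) * x ^ k :=
          mul_le_mul_of_nonneg_right (cube_le k) (pow_nonneg hx k)
      _ = 8 * (8 ^ k * x ^ k) := by ring
  calc ((k : ℝ) + 2) ^ 3 * x ^ k / ((k.factorial : ℝ)) ^ 2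
      ≤ (8 * (8 * x) ^ k) / ((k.factorial : ℝ)) ^ 2 := by gcongr
    _ ≤ (8 * (8 * x) ^ k) / (k.factorial : ℝ) := by
        have h2 : (k.factorial : ℝ) ≤ ((k.factorial : ℝ)) ^ 2 := by nlinarith
        gcongr
    _ = 8 * ((8 * x) ^ k / (k.factorial : ℝ)) := by ring

lemma summable_of_cube_bound {g : ℕ → ℝ} (C x : ℝ) (hx : 0 ≤ x)
    (hg : ∀ k, |g k| ≤ C * (((k : ℝ) + 2) ^ 3 * x ^ k / ((k.factorial : ℝ)) ^ 2)) :
    Summable g := by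
  apply Summable.of_norm_bounded ((master x hx).mul_left C)
  simpa [Real.norm_eq_abs] using hg

/-- Master termwise bound. -/
lemma term_bound {b : ℝ} (hb : 0 ≤ b) (j : ℕ) (P : ℕ → ℝ)
    (hP : ∀ k, |P k| ≤ ((k : ℝ) + 2) ^ 3) (M : ℝ) (hM : 1 ≤ M) (u : ℝ) (hu : |u| ≤ M)
    (e : ℕ → ℕ) (he : ∀ k, e k ≤ k) (k : ℕ) :
    |a b (k + j) * P k * u ^ e k|
      ≤ b ^ j * (((k : ℝ) + 2) ^ 3 * (b * M) ^ k / ((k.factorial : ℝ)) ^ 2) := by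
  have hM0 : (0 : ℝ) ≤ M := by linarith
  have haj : a b (k + j) ≤ b ^ j * a b k := by
    induction j with
    | zero => simp
    | succ n ih =>
      calc a b (k + (n + 1)) = a b ((k + n) + 1) := by ring_nf
        _ ≤ b * a b (k + n) := a_succ_le hb (k + n)
        _ ≤ b * (b ^ n * a b k) := mul_le_mul_of_nonneg_left ih hb
        _ = b ^ (n + 1) * a b k := by ring
  have hue : |u| ^ e k ≤ M ^ k := by
    calc |u| ^ e k ≤ M ^ e k := pow_le_pow_left₀ (abs_nonneg u) hu _
      _ ≤ M ^ k := pow_le_pow_right₀ hM (he k)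
  have hfac : (0 : ℝ) < ((k.factorial : ℝ)) ^ 2 := by
    have : (0 : ℝ) < (k.factorial : ℝ) := by exact_mod_cast k.factorial_pos
    positivity
  rw [abs_mul, abs_mul, abs_of_nonneg (a_nonneg hb _), abs_pow]
  have hba : 0 ≤ b ^ j * a b k := mul_nonneg (pow_nonneg hb j) (a_nonneg hb k)
  calc a b (k + j) * |P k| * |u| ^ e k
      ≤ (b ^ j * a b k) * ((k : ℝ) + 2) ^ 3 * M ^ k := by
        apply mul_le_mul _ hue (by positivity) (by positivity)
        exact mul_le_mul haj (hP k) (abs_nonneg _) hba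
    _ = b ^ j * (((k : ℝ) + 2) ^ 3 * (b ^ k * M ^ k) / ((k.factorial : ℝ)) ^ 2) := by
        unfold a; field_simp
    _ = b ^ j * (((k : ℝ) + 2) ^ 3 * (b * M) ^ k / ((k.factorial : ℝ)) ^ 2) := by
        rw [mul_pow]

lemma summable_term {b : ℝ} (hb : 0 ≤ b) (j : ℕ) (P : ℕ → ℝ)
    (hP : ∀ k, |P k| ≤ ((k : ℝ) + 2) ^ 3) (e : ℕ → ℕ) (he : ∀ k, e k ≤ k) (u : ℝ) :
    Summable (fun k => a b (k + j) * P k * u ^ e k) := by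
  have h0 : (0 : ℝ) ≤ |u| := abs_nonneg u
  refine summable_of_cube_bound (b ^ j) (b * (|u| + 1)) (by positivity) (fun k => ?_)
  exact term_bound hb j P hP (|u| + 1) (by linarith) u (by linarith) e he k

lemma summable_F {b : ℝ} (hb : 0 ≤ b) (u : ℝ) : Summable (fun k : ℕ => a b k * u ^ k) := by
  refine (summable_term hb 0 (fun _ => 1)
    (fun k => by rw [abs_one]; nlinarith [k.cast_nonneg (α := ℝ), mul_nonneg (k.cast_nonneg (α := ℝ)) (k.cast_nonneg (α := ℝ)), mul_nonneg (mul_nonneg (k.cast_nonneg (α := ℝ)) (k.cast_nonneg (α := ℝ))) (k.cast_nonneg (α := ℝ))]) id (fun k => le_refl k) u).congr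
    (fun k => by simp only [Nat.add_zero, mul_one, id_eq])

lemma summable_dF {b : ℝ} (hb : 0 ≤ b) (u : ℝ) :
    Summable (fun k : ℕ => a b k * ((k : ℝ) * u ^ (k - 1))) := by
  refine (summable_term hb 0 (fun k => (k : ℝ))
    (fun k => by rw [abs_of_nonneg k.cast_nonneg]; beta_reduce; nlinarith [k.cast_nonneg (α := ℝ), mul_nonneg (k.cast_nonneg (α := ℝ)) (k.cast_nonneg (α := ℝ)), mul_nonneg (mul_nonneg (k.cast_nonneg (α := ℝ)) (k.cast_nonneg (α := ℝ))) (k.cast_nonneg (α := ℝ))])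
    (fun k => k - 1) (fun k => Nat.sub_le k 1) u).congr (fun k => by simp only [Nat.add_zero, mul_assoc])

lemma summable_F1 {b : ℝ} (hb : 0 ≤ b) (u : ℝ) :
    Summable (fun k : ℕ => a b (k + 1) * ((k : ℝ) + 1) * u ^ k) := by
  refine (summable_term hb 1 (fun k => (k : ℝ) + 1)
    (fun k => by rw [abs_of_nonneg (by positivity)]; beta_reduce; nlinarith [k.cast_nonneg (α := ℝ), mul_nonneg (k.cast_nonneg (α := ℝ)) (k.cast_nonneg (α := ℝ)), mul_nonneg (mul_nonneg (k.cast_nonneg (α := ℝ)) (k.cast_nonneg (α := ℝ))) (k.cast_nonneg (α := ℝ))])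
    id (fun k => le_refl k) u).congr (fun k => by simp only [id_eq])

lemma summable_dF1 {b : ℝ} (hb : 0 ≤ b) (u : ℝ) :
    Summable (fun k : ℕ => a b (k + 1) * ((k : ℝ) + 1) * ((k : ℝ) * u ^ (k - 1))) := by
  refine (summable_term hb 1 (fun k => ((k : ℝ) + 1) * (k : ℝ))
    (fun k => by rw [abs_of_nonneg (by positivity)]; beta_reduce; nlinarith [k.cast_nonneg (α := ℝ), mul_nonneg (k.cast_nonneg (α := ℝ)) (k.cast_nonneg (α := ℝ)), mul_nonneg (mul_nonneg (k.cast_nonneg (α := ℝ)) (k.cast_nonneg (α := ℝ))) (k.cast_nonneg (α := ℝ))])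
    (fun k => k - 1) (fun k => Nat.sub_le k 1) u).congr (fun k => by ring)

lemma summable_F2 {b : ℝ} (hb : 0 ≤ b) (u : ℝ) :
    Summable (fun k : ℕ => a b (k + 2) * ((k : ℝ) + 2) * ((k : ℝ) + 1) * u ^ k) := by
  refine (summable_term hb 2 (fun k => ((k : ℝ) + 2) * ((k : ℝ) + 1))
    (fun k => by rw [abs_of_nonneg (by positivity)]; beta_reduce; nlinarith [k.cast_nonneg (α := ℝ), mul_nonneg (k.cast_nonneg (α := ℝ)) (k.cast_nonneg (α := ℝ)), mul_nonneg (mul_nonneg (k.cast_nonneg (α := ℝ)) (k.cast_nonneg (α := ℝ))) (k.cast_nonneg (α := ℝ))])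
    id (fun k => le_refl k) u).congr (fun k => by simp only [id_eq]; ring)

lemma summable_G {b : ℝ} (hb : 0 ≤ b) (u : ℝ) :
    Summable (fun k : ℕ => a b (k + 1) * ((k : ℝ) + 1) * (k : ℝ) * u ^ k) := by
  refine (summable_term hb 1 (fun k => ((k : ℝ) + 1) * (k : ℝ))
    (fun k => by rw [abs_of_nonneg (by positivity)]; beta_reduce; nlinarith [k.cast_nonneg (α := ℝ), mul_nonneg (k.cast_nonneg (α := ℝ)) (k.cast_nonneg (α := ℝ)), mul_nonneg (mul_nonneg (k.cast_nonneg (α := ℝ)) (k.cast_nonneg (α := ℝ))) (k.cast_nonneg (α := ℝ))])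
    id (fun k => le_refl k) u).congr (fun k => by simp only [id_eq]; ring)

lemma hasDerivAt_F {b : ℝ} (hb : 0 ≤ b) (u : ℝ) : HasDerivAt (F b) (F1 b u) u := by
  have h0 : (0 : ℝ) ≤ |u| := abs_nonneg u
  have key : HasDerivAt (fun z : ℝ => ∑' k : ℕ, a b k * z ^ k)
      (∑' k : ℕ, a b k * ((k : ℝ) * u ^ (k - 1))) u := by
    refine hasDerivAt_tsum_of_isPreconnected
      (u := fun k : ℕ => b ^ 0 * (((k : ℝ) + 2) ^ 3 * (b * (|u| + 1)) ^ k /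
        ((k.factorial : ℝ)) ^ 2))
      ?_ Metric.isOpen_ball (convex_ball (0 : ℝ) (|u| + 1)).isPreconnected
      (fun n y _ => (hasDerivAt_pow n y).const_mul (a b n))
      (fun n y hy => ?_)
      (by rw [Metric.mem_ball, Real.dist_eq, sub_zero]; linarith) ?_
      (by rw [Metric.mem_ball, Real.dist_eq, sub_zero]; linarith)
    · exact ((master (b * (|u| + 1)) (by positivity)).mul_left _)
    · have hy' : |y| ≤ |u| + 1 := by
        rw [Metric.mem_ball, Real.dist_eq, sub_zero] at hy
        linarith
      have := term_bound hb 0 (fun k => (k : ℝ))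
        (fun k => by rw [abs_of_nonneg k.cast_nonneg]; beta_reduce; nlinarith [k.cast_nonneg (α := ℝ), mul_nonneg (k.cast_nonneg (α := ℝ)) (k.cast_nonneg (α := ℝ)), mul_nonneg (mul_nonneg (k.cast_nonneg (α := ℝ)) (k.cast_nonneg (α := ℝ))) (k.cast_nonneg (α := ℝ))])
        (|u| + 1) (by linarith) y hy' (fun k => k - 1) (fun k => Nat.sub_le k 1) n
      have heq : a b n * ((n : ℝ) * y ^ (n - 1)) = a b (n + 0) * (n : ℝ) * y ^ (n - 1) := by
        rw [Nat.add_zero]; ring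
      rw [Real.norm_eq_abs, heq]
      exact this
    · exact summable_F hb u
  have h2 : (∑' k : ℕ, a b k * ((k : ℝ) * u ^ (k - 1))) = F1 b u := by
    rw [Summable.tsum_eq_zero_add (summable_dF hb u)]
    simp only [Nat.cast_zero, zero_mul, mul_zero, zero_add]
    unfold F1
    refine tsum_congr (fun k => ?_)
    push_cast
    ring
  rw [← h2]
  exact key

lemma hasDerivAt_F1 {b : ℝ} (hb : 0 ≤ b) (u : ℝ) : HasDerivAt (F1 b) (F2 b u) u := by
  have h0 : (0 : ℝ) ≤ |u| := abs_nonneg u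
  have key : HasDerivAt (fun z : ℝ => ∑' k : ℕ, a b (k + 1) * ((k : ℝ) + 1) * z ^ k)
      (∑' k : ℕ, a b (k + 1) * ((k : ℝ) + 1) * ((k : ℝ) * u ^ (k - 1))) u := by
    refine hasDerivAt_tsum_of_isPreconnected
      (u := fun k : ℕ => b ^ 1 * (((k : ℝ) + 2) ^ 3 * (b * (|u| + 1)) ^ k /
        ((k.factorial : ℝ)) ^ 2))
      ?_ Metric.isOpen_ball (convex_ball (0 : ℝ) (|u| + 1)).isPreconnected
      (fun n y _ => (hasDerivAt_pow n y).const_mul (a b (n + 1) * ((n : ℝ) + 1)))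
      (fun n y hy => ?_)
      (by rw [Metric.mem_ball, Real.dist_eq, sub_zero]; linarith) ?_
      (by rw [Metric.mem_ball, Real.dist_eq, sub_zero]; linarith)
    · exact ((master (b * (|u| + 1)) (by positivity)).mul_left _)
    · have hy' : |y| ≤ |u| + 1 := by
        rw [Metric.mem_ball, Real.dist_eq, sub_zero] at hy
        linarith
      have := term_bound hb 1 (fun k => ((k : ℝ) + 1) * (k : ℝ))
        (fun k => by rw [abs_of_nonneg (by positivity)]; beta_reduce; nlinarith [k.cast_nonneg (α := ℝ), mul_nonneg (k.cast_nonneg (α := ℝ)) (k.cast_nonneg (α := ℝ)), mul_nonneg (mul_nonneg (k.cast_nonneg (α := ℝ)) (k.cast_nonneg (α := ℝ))) (k.cast_nonneg (α := ℝ))])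
        (|u| + 1) (by linarith) y hy' (fun k => k - 1) (fun k => Nat.sub_le k 1) n
      have heq : a b (n + 1) * ((n : ℝ) + 1) * ((n : ℝ) * y ^ (n - 1))
          = a b (n + 1) * (((n : ℝ) + 1) * (n : ℝ)) * y ^ (n - 1) := by ring
      rw [Real.norm_eq_abs, heq]
      exact this
    · exact summable_F1 hb u
  have h2 : (∑' k : ℕ, a b (k + 1) * ((k : ℝ) + 1) * ((k : ℝ) * u ^ (k - 1))) = F2 b u := by
    rw [Summable.tsum_eq_zero_add (summable_dF1 hb u)]
    simp only [Nat.cast_zero, zero_mul, mul_zero, zero_add]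
    unfold F2
    refine tsum_congr (fun k => ?_)
    rw [show ∀ m : ℕ, m + 1 + 1 = m + 2 from fun m => rfl]
    push_cast
    ring
  rw [← h2]
  exact key

lemma ode {b : ℝ} (hb : 0 ≤ b) (u : ℝ) : u * F2 b u + F1 b u = b * F b u := by
  have h1 : u * F2 b u = ∑' k : ℕ, a b (k + 1) * ((k : ℝ) + 1) * (k : ℝ) * u ^ k := by
    rw [F2, ← tsum_mul_left, Summable.tsum_eq_zero_add (summable_G hb u)]
    simp only [Nat.cast_zero, mul_zero, zero_mul, zero_add]
    refine tsum_congr (fun k => ?_)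
    push_cast
    ring
  rw [h1, F1, ← Summable.tsum_add (summable_G hb u) (summable_F1 hb u), F, ← tsum_mul_left]
  refine tsum_congr (fun k => ?_)
  have hco := a_coeff b k
  have hbm : b * (a b k * u ^ k) = (b * a b k) * u ^ k := by ring
  linear_combination u ^ k * hco

lemma bessel_eq (lam c v : ℝ) (hc : c ≠ 0) (hv : 0 ≤ v) :
    besselI0 (lam / c * Real.sqrt v) = F ((lam / (2 * c)) ^ 2) v := by
  unfold besselI0 F a
  refine tsum_congr (fun k => ?_)
  have h1 : (lam / c * Real.sqrt v / 2) ^ 2 = (lam / (2 * c)) ^ 2 * v := by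
    have hs := Real.sq_sqrt hv
    field_simp
    linear_combination lam ^ 2 * hs
  rw [pow_mul, h1, mul_pow]
  ring

end Statement16Aux

open Statement16Aux in
/-- `q(x,t) = I₀((λ/c)√(c²t² - x²))` satisfies the one-dimensional
Klein–Gordon equation `∂²q/∂t² - λ²q = c² ∂²q/∂x²` on the open cone
`{(x,t) : |x| < ct, t > 0}`. -/
theorem statement16 (lam c : ℝ) (hlam : 0 < lam) (hc : 0 < c)
    (q : ℝ → ℝ → ℝ)
    (hq : ∀ x t : ℝ, q x t =
      besselI0 (lam / c * Real.sqrt (c ^ 2 * t ^ 2 - x ^ 2))) :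
    ∀ x t : ℝ, 0 < t → |x| < c * t →
      iteratedDeriv 2 (fun s => q x s) t - lam ^ 2 * q x t
        = c ^ 2 * iteratedDeriv 2 (fun s => q s t) x := by
  intro x t ht hxt
  set b : ℝ := (lam / (2 * c)) ^ 2 with hbdef
  have hb : 0 ≤ b := sq_nonneg _
  have hc' : c ≠ 0 := ne_of_gt hc
  have hlamsq : lam ^ 2 = 4 * c ^ 2 * b := by
    rw [hbdef]; field_simp; ring
  have habs := abs_lt.mp hxt
  have hxt' : x ^ 2 < c ^ 2 * t ^ 2 := by nlinarith [abs_nonneg x, sq_abs x]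
  have hq' : ∀ x' t' : ℝ, 0 ≤ c ^ 2 * t' ^ 2 - x' ^ 2 →
      q x' t' = F b (c ^ 2 * t' ^ 2 - x' ^ 2) := by
    intro x' t' h
    rw [hq, hbdef]
    exact bessel_eq lam c _ hc' h
  set u₀ : ℝ := c ^ 2 * t ^ 2 - x ^ 2 with hu₀
  -- time part
  have hUt : IsOpen {s : ℝ | x ^ 2 < c ^ 2 * s ^ 2} :=
    isOpen_lt continuous_const (by continuity)
  have htmem : t ∈ {s : ℝ | x ^ 2 < c ^ 2 * s ^ 2} := hxt'
  have hgderiv : ∀ s : ℝ, HasDerivAt (fun s' : ℝ => c ^ 2 * s' ^ 2 - x ^ 2) (2 * c ^ 2 * s) s := by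
    intro s
    have h := ((hasDerivAt_pow 2 s).const_mul (c ^ 2)).sub_const (x ^ 2)
    exact h.congr_deriv (by norm_num; ring)
  have hderiv_t : ∀ s ∈ {s : ℝ | x ^ 2 < c ^ 2 * s ^ 2},
      HasDerivAt (fun s' => q x s') (F1 b (c ^ 2 * s ^ 2 - x ^ 2) * (2 * c ^ 2 * s)) s := by
    intro s hs
    have hcomp := (hasDerivAt_F hb (c ^ 2 * s ^ 2 - x ^ 2)).comp s (hgderiv s)
    apply hcomp.congr_of_eventuallyEq
    filter_upwards [hUt.mem_nhds hs] with s' hs'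
    have : x ^ 2 < c ^ 2 * s' ^ 2 := hs'
    exact (hq' x s' (by linarith))
  have hd1 : deriv (fun s => q x s) =ᶠ[nhds t]
      fun s => F1 b (c ^ 2 * s ^ 2 - x ^ 2) * (2 * c ^ 2 * s) := by
    filter_upwards [hUt.mem_nhds htmem] with s hs
    exact (hderiv_t s hs).deriv
  have hdd_t : HasDerivAt (fun s => F1 b (c ^ 2 * s ^ 2 - x ^ 2) * (2 * c ^ 2 * s))
      (F2 b u₀ * (2 * c ^ 2 * t) * (2 * c ^ 2 * t) + F1 b u₀ * (2 * c ^ 2)) t := by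
    have h1 := (hasDerivAt_F1 hb (c ^ 2 * t ^ 2 - x ^ 2)).comp t (hgderiv t)
    have h2 : HasDerivAt (fun s : ℝ => 2 * c ^ 2 * s) (2 * c ^ 2) t := by
      simpa using (hasDerivAt_id t).const_mul (2 * c ^ 2)
    have := h1.mul h2
    exact this.congr_deriv rfl
  have hiter_t : iteratedDeriv 2 (fun s => q x s) t
      = F2 b u₀ * (2 * c ^ 2 * t) * (2 * c ^ 2 * t) + F1 b u₀ * (2 * c ^ 2) := by
    rw [iteratedDeriv_succ, iteratedDeriv_one, hd1.deriv_eq]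
    exact hdd_t.deriv
  -- space part
  have hUx : IsOpen {y : ℝ | y ^ 2 < c ^ 2 * t ^ 2} :=
    isOpen_lt (by continuity) continuous_const
  have hxmem : x ∈ {y : ℝ | y ^ 2 < c ^ 2 * t ^ 2} := hxt'
  have hhderiv : ∀ y : ℝ, HasDerivAt (fun y' : ℝ => c ^ 2 * t ^ 2 - y' ^ 2) (-(2 * y)) y := by
    intro y
    have h := (hasDerivAt_pow 2 y).const_sub (c ^ 2 * t ^ 2)
    exact h.congr_deriv (by norm_num)
  have hderiv_x : ∀ y ∈ {y : ℝ | y ^ 2 < c ^ 2 * t ^ 2},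
      HasDerivAt (fun y' => q y' t) (F1 b (c ^ 2 * t ^ 2 - y ^ 2) * (-(2 * y))) y := by
    intro y hy
    have hcomp := (hasDerivAt_F hb (c ^ 2 * t ^ 2 - y ^ 2)).comp y (hhderiv y)
    apply hcomp.congr_of_eventuallyEq
    filter_upwards [hUx.mem_nhds hy] with y' hy'
    have : y' ^ 2 < c ^ 2 * t ^ 2 := hy'
    exact (hq' y' t (by linarith))
  have hd1x : deriv (fun y => q y t) =ᶠ[nhds x]
      fun y => F1 b (c ^ 2 * t ^ 2 - y ^ 2) * (-(2 * y)) := by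
    filter_upwards [hUx.mem_nhds hxmem] with y hy
    exact (hderiv_x y hy).deriv
  have hdd_x : HasDerivAt (fun y => F1 b (c ^ 2 * t ^ 2 - y ^ 2) * (-(2 * y)))
      (F2 b u₀ * (-(2 * x)) * (-(2 * x)) + F1 b u₀ * (-2)) x := by
    have h1 := (hasDerivAt_F1 hb (c ^ 2 * t ^ 2 - x ^ 2)).comp x (hhderiv x)
    have h2 : HasDerivAt (fun y : ℝ => -(2 * y)) (-2) x := by
      exact ((hasDerivAt_id x).const_mul (2 : ℝ)).neg.congr_deriv (by ring)
    have := h1.mul h2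
    exact this.congr_deriv rfl
  have hiter_x : iteratedDeriv 2 (fun y => q y t) x
      = F2 b u₀ * (-(2 * x)) * (-(2 * x)) + F1 b u₀ * (-2) := by
    rw [iteratedDeriv_succ, iteratedDeriv_one, hd1x.deriv_eq]
    exact hdd_x.deriv
  have hqxt : q x t = F b u₀ := hq' x t (by linarith)
  have hode := ode hb u₀
  rw [hiter_t, hiter_x, hqxt]
  linear_combination 4 * c ^ 2 * hode - F b u₀ * hlamsq
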